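/- Let f_1, ..., f_k be pairwise distinct affine functions on a nonempty open set U in ℝ^n. Then there exist a constant c > 0, an index i ∈ {1,...,k}, and a nonempty open subset V of U such that f_i(x) + c < f_j(x) for all x ∈ V and all j ≠ i. -/
import Mathlib


/-- An affine function on ℝⁿ: `x ↦ a₀ + Σ aᵢ xᵢ`. -/
def IsAffineFn {n : ℕ} (f : (Fin n → ℝ) → ℝ) : Prop :=
  ∃ (a₀ : ℝ) (a : Fin n → ℝ), ∀ x, f x = a₀ + ∑ i, a i * x i

lemma IsAffineFn.continuous {n : ℕ} {f : (Fin n → ℝ) → ℝ} (hf : IsAffineFn f) :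
    Continuous f := by
  obtain ⟨a₀, a, ha⟩ := hf
  have : f = fun x => a₀ + ∑ i, a i * x i := funext ha
  rw [this]
  exact continuous_const.add (continuous_finset_sum _ fun i _ =>
    continuous_const.mul (continuous_apply i))

lemma affine_zero_interior {n : ℕ} (b₀ : ℝ) (b : Fin n → ℝ)
    (hne : ¬ ∀ x : Fin n → ℝ, b₀ + ∑ i, b i * x i = 0) :
    interior {x : Fin n → ℝ | b₀ + ∑ i, b i * x i = 0} = ∅ := by
  by_contra h
  obtain ⟨x₀, hx₀⟩ := Set.nonempty_iff_ne_empty.mpr h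
  obtain ⟨ε, hε, hball⟩ := Metric.isOpen_iff.mp isOpen_interior x₀ hx₀
  have hsub : Metric.ball x₀ ε ⊆ {x : Fin n → ℝ | b₀ + ∑ i, b i * x i = 0} :=
    hball.trans interior_subset
  have hx₀mem : b₀ + ∑ i, b i * x₀ i = 0 := hsub (Metric.mem_ball_self hε)
  have hbz : ∀ m, b m = 0 := by
    intro m
    set y := Function.update x₀ m (x₀ m + ε / 2) with hy
    have hymem : y ∈ Metric.ball x₀ ε := by
      rw [Metric.mem_ball, dist_pi_lt_iff hε]
      intro i
      by_cases him : i = m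
      · subst him
        simp only [hy, Function.update_self, Real.dist_eq, add_sub_cancel_left]
        rw [abs_of_pos (by linarith : (0:ℝ) < ε / 2)]
        linarith
      · simp [hy, Function.update_of_ne him]
        exact hε
    have hyval : b₀ + ∑ i, b i * y i = 0 := hsub hymem
    have hsum : ∑ i, b i * y i = ∑ i, b i * x₀ i + b m * (ε / 2) := by
      have : ∀ i, b i * y i = b i * x₀ i + (if i = m then b m * (ε / 2) else 0) := by
        intro i
        by_cases him : i = m
        · subst him; simp [hy]; ring
        · simp [hy, Function.update_of_ne him, him]
      rw [Finset.sum_congr rfl fun i _ => this i, Finset.sum_add_distrib,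
        Finset.sum_ite_eq' Finset.univ m fun _ => b m * (ε / 2)]
      simp
    rw [hsum] at hyval
    have : b m * (ε / 2) = 0 := by linarith
    have hε2 : ε / 2 ≠ 0 := by positivity
    exact (mul_eq_zero.mp this).resolve_right hε2
  apply hne
  intro x
  have : ∑ i, b i * x i = 0 := by
    apply Finset.sum_eq_zero; intro i _; rw [hbz i]; ring
  rw [this]
  have : ∑ i, b i * x₀ i = 0 := by
    apply Finset.sum_eq_zero; intro i _; rw [hbz i]; ring
  linarith [hx₀mem, this]

theorem affine_dominance {n k : ℕ} (U : Set (Fin n → ℝ)) (hU : IsOpen U)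
    (hUne : U.Nonempty) (f : Fin k → (Fin n → ℝ) → ℝ)
    (haff : ∀ i, IsAffineFn (f i))
    (hdist : ∀ i j, i ≠ j → f i ≠ f j) (hk : 0 < k) :
    ∃ (c : ℝ) (i : Fin k) (V : Set (Fin n → ℝ)),
      0 < c ∧ V ⊆ U ∧ IsOpen V ∧ V.Nonempty ∧
      ∀ x ∈ V, ∀ j, j ≠ i → f i x + c < f j x := by
  -- The set where some pair of distinct functions agree
  set S : Fin k × Fin k → Set (Fin n → ℝ) :=
    fun p => {x | p.1 ≠ p.2 ∧ f p.1 x = f p.2 x} with hS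
  -- each (S p)ᶜ is residual
  have hres : ∀ p, (S p)ᶜ ∈ residual (Fin n → ℝ) := by
    intro p
    by_cases hp : p.1 = p.2
    · have : S p = ∅ := by ext x; simp [hS, hp]
      rw [this, Set.compl_empty]
      exact Filter.univ_mem
    · have hSp : S p = {x | f p.1 x = f p.2 x} := by ext x; simp [hS, hp]
      obtain ⟨a₀, a, ha⟩ := haff p.1
      obtain ⟨b₀, b, hb⟩ := haff p.2
      have hset : S p = {x : Fin n → ℝ | (a₀ - b₀) + ∑ i, (a i - b i) * x i = 0} := by
        rw [hSp]; ext x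
        have hsum : ∑ i, (a i - b i) * x i = (∑ i, a i * x i) - ∑ i, b i * x i := by
          rw [← Finset.sum_sub_distrib]
          exact Finset.sum_congr rfl fun i _ => by ring
        simp only [Set.mem_setOf_eq, ha, hb, hsum]
        constructor <;> intro h <;> linarith
      have hne : ¬ ∀ x : Fin n → ℝ, (a₀ - b₀) + ∑ i, (a i - b i) * x i = 0 := by
        intro hall
        apply hdist p.1 p.2 hp
        funext x
        have := hall x
        have hsum : ∑ i, (a i - b i) * x i = (∑ i, a i * x i) - ∑ i, b i * x i := by
          rw [← Finset.sum_sub_distrib]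
          exact Finset.sum_congr rfl fun i _ => by ring
        rw [ha, hb]
        rw [hsum] at this
        linarith
      have hclosed : IsClosed (S p) := by
        rw [hSp]
        exact isClosed_eq (haff p.1).continuous (haff p.2).continuous
      have hint : interior (S p) = ∅ := by
        rw [hset]; exact affine_zero_interior _ _ hne
      exact residual_of_dense_open hclosed.isOpen_compl
        (interior_eq_empty_iff_dense_compl.mp hint)
  have hresall : (⋂ p, (S p)ᶜ) ∈ residual (Fin n → ℝ) :=
    countable_iInter_mem.mpr hres
  have hdense : Dense (⋂ p, (S p)ᶜ) := dense_of_mem_residual hresall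
  obtain ⟨x₀, hx₀mem, hx₀U⟩ := hdense.exists_mem_open hU hUne
  have hvals : ∀ i j : Fin k, i ≠ j → f i x₀ ≠ f j x₀ := by
    intro i j hij heq
    exact (Set.mem_iInter.mp hx₀mem (i, j)) ⟨hij, heq⟩
  -- choose minimizing index
  obtain ⟨i₀, -, hmin⟩ := Finset.exists_min_image Finset.univ (fun j => f j x₀)
    ⟨⟨0, hk⟩, Finset.mem_univ _⟩
  have hstrict : ∀ j, j ≠ i₀ → f i₀ x₀ < f j x₀ := fun j hj =>
    lt_of_le_of_ne (hmin j (Finset.mem_univ j)) (hvals i₀ j (Ne.symm hj))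
  -- choose a gap constant
  obtain ⟨c, hc, hgap⟩ : ∃ c : ℝ, 0 < c ∧ ∀ j, j ≠ i₀ → f i₀ x₀ + c < f j x₀ := by
    rcases (Finset.univ.erase i₀).eq_empty_or_nonempty with h | h
    · exact ⟨1, one_pos, fun j hj =>
        absurd (Finset.mem_erase.mpr ⟨hj, Finset.mem_univ j⟩) (by simp [h])⟩
    · refine ⟨((Finset.univ.erase i₀).inf' h fun j => f j x₀ - f i₀ x₀) / 2, ?_, ?_⟩
      · have : ∀ j ∈ Finset.univ.erase i₀, 0 < f j x₀ - f i₀ x₀ := fun j hj => by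
          have := hstrict j (Finset.mem_erase.mp hj).1; linarith
        have := (Finset.lt_inf'_iff h).mpr this
        linarith
      · intro j hj
        have hmem : j ∈ Finset.univ.erase i₀ := Finset.mem_erase.mpr ⟨hj, Finset.mem_univ j⟩
        have h1 := Finset.inf'_le (fun j => f j x₀ - f i₀ x₀) hmem
        have h2 : 0 < f j x₀ - f i₀ x₀ := by have := hstrict j hj; linarith
        nlinarith [Finset.inf'_le (fun j => f j x₀ - f i₀ x₀) hmem]
  -- the open set V
  refine ⟨c, i₀, U ∩ ⋂ j ∈ Finset.univ.erase i₀, {x | f i₀ x + c < f j x},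
    hc, Set.inter_subset_left, ?_, ⟨x₀, hx₀U, ?_⟩, ?_⟩
  · exact hU.inter (isOpen_biInter_finset fun j _ =>
      isOpen_lt ((haff i₀).continuous.add continuous_const) (haff j).continuous)
  · refine Set.mem_iInter₂.mpr fun j hj => hgap j (Finset.mem_erase.mp hj).1
  · intro x hx j hj
    exact Set.mem_iInter₂.mp hx.2 j (Finset.mem_erase.mpr ⟨hj, Finset.mem_univ j⟩)
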